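/- Let H be a finite-dimensional complex inner product space and let Π and Δ be orthogonal projections on H. Then the orthogonal projection onto ker Π ∩ ker Δ satisfies P_{ker Π ∩ ker Δ} = (I − Δ)[ I − (Π − ΠΔΠ)⁺ (I − Δ) ]. -/

import Mathlib

open LinearMap

/-- The orthogonal projection onto a submodule, as an endomorphism of the ambient space. -/
noncomputable def projL {H : Type*} [NormedAddCommGroup H] [InnerProductSpace ℂ H]
    (K : Submodule ℂ H) [K.HasOrthogonalProjection] : H →ₗ[ℂ] H :=
  K.subtype ∘ₗ (K.orthogonalProjectionOnto).toLinearMap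

/-- The four Moore–Penrose equations: `B` is the Moore–Penrose pseudoinverse of `A`. -/
def IsMPInv {H : Type*} [NormedAddCommGroup H] [InnerProductSpace ℂ H]
    [FiniteDimensional ℂ H] (A B : H →ₗ[ℂ] H) : Prop :=
  A ∘ₗ B ∘ₗ A = A ∧ B ∘ₗ A ∘ₗ B = B ∧
    adjoint (A ∘ₗ B) = A ∘ₗ B ∧ adjoint (B ∘ₗ A) = B ∘ₗ A

/-- If `T * adjoint T = 0` then `T = 0`. -/
theorem mul_adjoint_self_eq_zero' {H : Type*} [NormedAddCommGroup H] [InnerProductSpace ℂ H]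
    [FiniteDimensional ℂ H] {T : H →ₗ[ℂ] H} (h : T * adjoint T = 0) : T = 0 := by
  have hadj : adjoint T = 0 := by
    ext x
    have h1 : (inner ℂ (adjoint T x) (adjoint T x) : ℂ) = 0 := by
      rw [adjoint_inner_left]
      have : T (adjoint T x) = (T * adjoint T) x := rfl
      rw [this, h]
      simp
    simpa using inner_self_eq_zero.mp h1
  have := congrArg adjoint hadj
  rwa [adjoint_adjoint, show adjoint (0 : H →ₗ[ℂ] H) = 0 from by ext x; simp] at this

/-- `P_{ker Π ∩ ker Δ} = (I − Δ)[ I − (Π − ΠΔΠ)⁺ (I − Δ) ]`. -/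
theorem stmt3 {H : Type*} [NormedAddCommGroup H] [InnerProductSpace ℂ H]
    [FiniteDimensional ℂ H]
    (Pr Dl : H →ₗ[ℂ] H)
    (hPr : Pr ∘ₗ Pr = Pr) (hPra : adjoint Pr = Pr)
    (hDl : Dl ∘ₗ Dl = Dl) (hDla : adjoint Dl = Dl)
    (B : H →ₗ[ℂ] H) (hB : IsMPInv (Pr - Pr ∘ₗ Dl ∘ₗ Pr) B) :
    projL (ker Pr ⊓ ker Dl) =
      (LinearMap.id - Dl) ∘ₗ (LinearMap.id - B ∘ₗ (LinearMap.id - Dl)) := by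
  set A : H →ₗ[ℂ] H := Pr - Pr ∘ₗ Dl ∘ₗ Pr with hAdef
  obtain ⟨h1', h2', h3, h4⟩ := hB
  have h1 : A * B * A = A := by rw [mul_assoc]; exact h1'
  have h2 : B * A * B = B := by rw [mul_assoc]; exact h2'
  have h3 : adjoint (A * B) = A * B := h3
  have h4 : adjoint (B * A) = B * A := h4
  have hmuladj : ∀ X Y : H →ₗ[ℂ] H, adjoint (X * Y) = adjoint Y * adjoint X := by
    intro X Y
    rw [Module.End.mul_eq_comp, Module.End.mul_eq_comp, adjoint_comp]
  set Q : H →ₗ[ℂ] H := LinearMap.id - Dl with hQdef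
  have hid : (LinearMap.id : H →ₗ[ℂ] H) = 1 := rfl
  have hQ1 : Q = 1 - Dl := by rw [hQdef, hid]
  have hPrm : Pr * Pr = Pr := hPr
  have hDlm : Dl * Dl = Dl := hDl
  have hAm : A = Pr - Pr * Dl * Pr := by
    rw [hAdef, ← Module.End.mul_eq_comp, ← Module.End.mul_eq_comp, mul_assoc]
  have hQQ : Q * Q = Q := by
    rw [hQ1, sub_mul, one_mul, mul_sub, mul_one, hDlm, sub_self, sub_zero]
  have hidadj : adjoint (1 : H →ₗ[ℂ] H) = 1 := by
    rw [← star_eq_adjoint, star_one]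
  have hQadj : adjoint Q = Q := by
    rw [hQ1, map_sub, hDla, hidadj]
  have hAQ : A = Pr * Q * Pr := by
    rw [hAm, hQ1, mul_sub, mul_one, sub_mul, hPrm]
  have hAadj : adjoint A = A := by
    rw [hAm, map_sub, hPra, hmuladj, hmuladj, hPra, hDla, mul_assoc]
  have hPrA : Pr * A = A := by
    rw [hAm, mul_sub, ← mul_assoc, hPrm, mul_assoc Pr Dl Pr, ← mul_assoc, hPrm,
      mul_assoc]
  have hAPr : A * Pr = A := by
    rw [hAm, sub_mul, hPrm, mul_assoc, mul_assoc, mul_assoc, hPrm, ← mul_assoc]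
  set C : H →ₗ[ℂ] H := adjoint B with hCdef
  have hABCA : A * B = C * A := by
    conv_lhs => rw [← h3]
    rw [hmuladj, hAadj]
  have hBACA : B * A = A * C := by
    conv_lhs => rw [← h4]
    rw [hmuladj, hAadj]
  -- B = A * C * B  (so Pr * B = B)
  have hBACB : B = A * C * B := by
    rw [← hBACA]; exact h2.symm
  have hPrB : Pr * B = B := by
    conv_lhs => rw [hBACB, ← mul_assoc, ← mul_assoc, hPrA]
    exact hBACB.symm
  -- B = B * C * A  (kills ker A), C = C * B * A
  have hBBCA : B = B * C * A := by
    conv_lhs => rw [← h2, mul_assoc, hABCA, ← mul_assoc]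
  have hCCBA : C = C * B * A := by
    have := congrArg adjoint hBACB
    rw [hmuladj, hmuladj, hAadj, adjoint_adjoint, ← hCdef, ← mul_assoc] at this
    exact this
  -- key: A * B * (Pr * Q) = Pr * Q
  have hM : (Pr * Q - A * B * (Pr * Q)) = 0 := by
    apply mul_adjoint_self_eq_zero'
    have hPQadj : adjoint (Pr * Q) = Q * Pr := by rw [hmuladj, hPra, hQadj]
    rw [map_sub, hmuladj (A * B) (Pr * Q), hPQadj, h3]
    have expand : (Pr * Q - A * B * (Pr * Q)) * (Q * Pr - Q * Pr * (A * B))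
        = (Pr * (Q * Q) * Pr) - (Pr * (Q * Q) * Pr) * (A * B)
          - A * B * (Pr * (Q * Q) * Pr) + (A * B) * (Pr * (Q * Q) * Pr) * (A * B) := by
      noncomm_ring
    rw [expand, hQQ, ← hAQ]
    rw [show A * B * A * (A * B) = (A * B * A) * (A * B) from rfl, h1]
    noncomm_ring
  have hABPrQ : A * B * (Pr * Q) = Pr * Q := (sub_eq_zero.mp hM).symm
  set T : H →ₗ[ℂ] H := Q - Q * B * Q with hTdef
  have hPrT : Pr * T = 0 := by
    have e1 : Pr * (Q * B * Q) = A * B * Q := by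
      rw [show Q * B * Q = Q * (Pr * B) * Q from by rw [hPrB], hAQ]
      noncomm_ring
    have hABPr : A * B * Pr = A * B := by rw [hABCA, mul_assoc, hAPr]
    have e2 : A * B * Q = Pr * Q := by
      rw [← hABPr, mul_assoc (A*B) Pr Q]
      exact hABPrQ
    rw [hTdef, mul_sub, e1, e2, sub_self]
  have hDlT : Dl * T = 0 := by
    have hDlQ : Dl * Q = 0 := by rw [hQ1, mul_sub, mul_one, hDlm, sub_self]
    rw [hTdef, mul_sub, ← mul_assoc, ← mul_assoc, hDlQ, zero_mul, zero_mul, sub_self]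
  have hTadj : adjoint T = Q - Q * C * Q := by
    rw [hTdef, map_sub, hQadj, hmuladj, hmuladj, hQadj, ← hCdef, mul_assoc]
  -- conclude pointwise
  have hgoal : (LinearMap.id - Dl) ∘ₗ (LinearMap.id - B ∘ₗ (LinearMap.id - Dl)) = T := by
    rw [← hQdef, ← Module.End.mul_eq_comp, ← Module.End.mul_eq_comp, hTdef, hid, mul_sub,
      mul_one, ← mul_assoc]
  rw [hgoal]
  apply LinearMap.ext
  intro x
  show ((ker Pr ⊓ ker Dl).starProjection x : H) = T x
  apply Submodule.eq_starProjection_of_mem_of_inner_eq_zero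
  · constructor
    · show T x ∈ ker Pr
      rw [LinearMap.mem_ker]
      have : Pr (T x) = (Pr * T) x := rfl
      rw [this, hPrT]; simp
    · show T x ∈ ker Dl
      rw [LinearMap.mem_ker]
      have : Dl (T x) = (Dl * T) x := rfl
      rw [this, hDlT]; simp
  · intro w hw
    rw [Submodule.mem_inf] at hw
    obtain ⟨hw1, hw2⟩ := hw
    rw [LinearMap.mem_ker] at hw1 hw2
    have hQw : Q w = w := by rw [hQdef]; simp [hw2]
    have hAw : A w = 0 := by rw [hAdef]; simp [hw1]
    have hCw : C w = 0 := by
      have : C w = (C * B * A) w := by rw [← hCCBA]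
      rw [this, show (C * B * A) w = (C * B) (A w) from rfl, hAw, map_zero]
    have hTaw : adjoint T w = w := by
      rw [hTadj, show (Q - Q * C * Q) w = Q w - (Q * C) (Q w) from rfl, hQw,
        show (Q * C) w = Q (C w) from rfl, hCw, map_zero, sub_zero]
    rw [inner_sub_left,
      show (inner ℂ (T x) w : ℂ) = inner ℂ x (adjoint T w) from (adjoint_inner_right T x w).symm,
      hTaw, sub_self]
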